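/- Let M ≥ 3 be an integer and let η ∈ ℝ, ϑ ∈ (−π/2, π/2) with cos ϑ > 2/M. Consider the azimuth cut φ ↦ f(φ, ϑ; η, ϑ) of the sUPA array factor. Then f(η + arcsin(2/(M·cos ϑ)), ϑ; η, ϑ) = 0 and f(η − arcsin(2/(M·cos ϑ)), ϑ; η, ϑ) = 0, while f(φ, ϑ; η, ϑ) ≠ 0 for every φ with |φ − η| < arcsin(2/(M·cos ϑ)). Consequently the null-to-null azimuth beamwidth of the main lobe equals 2·arcsin(2/(M·cos ϑ)). -/

import Mathlib

open Real Complex Finset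

/-- The Dirichlet kernel `H_M(x) = (1/M) ∑_{m=0}^{M-1} exp(iπ m x)`. -/
noncomputable def dirichletKernel (M : ℕ) (x : ℝ) : ℂ :=
  (1 / (M : ℂ)) * ∑ m ∈ Finset.range M, Complex.exp (Complex.I * (Real.pi : ℂ) * (m : ℂ) * (x : ℂ))

/-- The sUPA array factor
`f(φ,θ;η,ϑ) = M² H_M(cos θ sin(φ−η)) H_M(sin θ cos ϑ − cos θ sin ϑ cos(φ−η))`. -/
noncomputable def sUPAFactor (M : ℕ) (φ θ η ϑ : ℝ) : ℂ :=
  (M : ℂ) ^ 2 * dirichletKernel M (Real.cos θ * Real.sin (φ - η)) *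
    dirichletKernel M (Real.sin θ * Real.cos ϑ - Real.cos θ * Real.sin ϑ * Real.cos (φ - η))

lemma dk_geom (M : ℕ) (x : ℝ) :
    dirichletKernel M x =
      (1 / (M : ℂ)) * ∑ m ∈ Finset.range M, (Complex.exp (Complex.I * (Real.pi : ℂ) * (x : ℂ))) ^ m := by
  unfold dirichletKernel
  congr 1
  refine Finset.sum_congr rfl fun m _ => ?_
  rw [← Complex.exp_nat_mul]
  ring_nf

lemma exp_pi_ne_one {x : ℝ} (hx0 : x ≠ 0) (hx2 : |x| < 2) :
    Complex.exp (Complex.I * (Real.pi : ℂ) * (x : ℂ)) ≠ 1 := by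
  intro h
  rw [Complex.exp_eq_one_iff] at h
  obtain ⟨n, hn⟩ := h
  have hI : (Complex.I * (Real.pi : ℂ)) ≠ 0 :=
    mul_ne_zero Complex.I_ne_zero (Complex.ofReal_ne_zero.mpr Real.pi_ne_zero)
  have h2 : (Complex.I * (Real.pi : ℂ)) * ((x : ℂ) - 2 * n) = 0 := by
    linear_combination hn
  have h3 : (x : ℂ) = 2 * n := by
    have := (mul_eq_zero.mp h2).resolve_left hI
    have := sub_eq_zero.mp this
    exact this
  have h4 : x = 2 * (n : ℝ) := by exact_mod_cast h3
  rcases eq_or_ne n 0 with rfl | hn0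
  · exact hx0 (by simpa using h4)
  · have : (1 : ℝ) ≤ |(n : ℝ)| := by
      have : (1 : ℤ) ≤ |n| := Int.one_le_abs hn0
      exact_mod_cast this
    have h5 : (2:ℝ) ≤ |x| := by rw [h4, abs_mul, show |(2:ℝ)| = 2 by norm_num]; nlinarith
    linarith

lemma dk_eq_zero (M : ℕ) {x : ℝ} (hx0 : x ≠ 0) (hx2 : |x| < 2) (n : ℤ)
    (hn : (M : ℝ) * x = 2 * n) : dirichletKernel M x = 0 := by
  rw [dk_geom]
  have hq : Complex.exp (Complex.I * (Real.pi : ℂ) * (x : ℂ)) ≠ 1 := exp_pi_ne_one hx0 hx2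
  rw [geom_sum_eq hq]
  have hqM : (Complex.exp (Complex.I * (Real.pi : ℂ) * (x : ℂ))) ^ M = 1 := by
    rw [← Complex.exp_nat_mul]
    have hcast : ((M : ℝ) * x : ℂ) = 2 * (n : ℂ) := by exact_mod_cast congrArg (Complex.ofReal) hn
    push_cast at hcast
    rw [show (M : ℂ) * (Complex.I * (Real.pi : ℂ) * (x : ℂ)) = (n : ℂ) * (2 * (Real.pi : ℂ) * Complex.I) by
      linear_combination Complex.I * (Real.pi : ℂ) * hcast]
    exact Complex.exp_int_mul_two_pi_mul_I n
  rw [hqM]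
  simp

lemma dk_ne_zero (M : ℕ) (hM : 1 ≤ M) {x : ℝ} (hx : |x| < 2 / M) : dirichletKernel M x ≠ 0 := by
  have hM0 : (0 : ℝ) < M := by exact_mod_cast hM
  have hMc : (M : ℂ) ≠ 0 := by exact_mod_cast hM0.ne'
  rcases eq_or_ne x 0 with rfl | hx0
  · rw [dk_geom]
    simp [hMc]
  · rw [dk_geom]
    have hM1 : (1 : ℝ) ≤ M := by exact_mod_cast hM
    have hx2 : |x| < 2 := lt_of_lt_of_le hx (by
      rw [div_le_iff₀ hM0]; nlinarith)
    have hq : Complex.exp (Complex.I * (Real.pi : ℂ) * (x : ℂ)) ≠ 1 := exp_pi_ne_one hx0 hx2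
    rw [geom_sum_eq hq]
    have hqM : (Complex.exp (Complex.I * (Real.pi : ℂ) * (x : ℂ))) ^ M ≠ 1 := by
      rw [← Complex.exp_nat_mul]
      have : (M : ℂ) * (Complex.I * (Real.pi : ℂ) * (x : ℂ)) =
          Complex.I * (Real.pi : ℂ) * (((M : ℝ) * x : ℝ) : ℂ) := by push_cast; ring
      rw [this]
      apply exp_pi_ne_one
      · exact mul_ne_zero hM0.ne' hx0
      · rw [abs_mul, abs_of_pos hM0]
        calc (M : ℝ) * |x| < (M : ℝ) * (2 / M) := by
              exact mul_lt_mul_of_pos_left hx hM0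
          _ = 2 := by field_simp
    exact mul_ne_zero (by simp [hMc]) (div_ne_zero (sub_ne_zero.mpr hqM) (sub_ne_zero.mpr hq))

set_option maxHeartbeats 1000000 in
/-- Azimuth cut of the sUPA array factor: for `M ≥ 3` and `cos ϑ > 2/M`, the first nulls
around the peak `φ = η` lie exactly at `φ = η ± arcsin(2/(M cos ϑ))`, and there is no null
strictly inside; hence the null-to-null azimuth beamwidth equals `2 arcsin(2/(M cos ϑ))`. -/
theorem sUPA_azimuth_beamwidth (M : ℕ) (hM : 3 ≤ M) (η : ℝ) (ϑ : ℝ)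
    (hϑ : ϑ ∈ Set.Ioo (-(Real.pi / 2)) (Real.pi / 2))
    (hcos : 2 / (M : ℝ) < Real.cos ϑ) :
    sUPAFactor M (η + Real.arcsin (2 / (M * Real.cos ϑ))) ϑ η ϑ = 0 ∧
    sUPAFactor M (η - Real.arcsin (2 / (M * Real.cos ϑ))) ϑ η ϑ = 0 ∧
    ∀ φ : ℝ, |φ - η| < Real.arcsin (2 / (M * Real.cos ϑ)) → sUPAFactor M φ ϑ η ϑ ≠ 0 := by
  have hc : 0 < Real.cos ϑ := Real.cos_pos_of_mem_Ioo hϑ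
  set c := Real.cos ϑ with hcdef
  have hM3 : (3 : ℝ) ≤ (M : ℝ) := by exact_mod_cast hM
  have hM0 : (0 : ℝ) < M := by linarith
  have hMc : 2 < (M : ℝ) * c := by
    rw [div_lt_iff₀ hM0] at hcos; linarith
  set s : ℝ := 2 / ((M : ℝ) * c) with hsdef
  have hs0 : 0 < s := div_pos two_pos (by linarith)
  have hs1 : s < 1 := (div_lt_one (by linarith)).mpr hMc
  have hsin : Real.sin (Real.arcsin s) = s := Real.sin_arcsin (by linarith) hs1.le
  have hcs : c * s = 2 / M := by
    rw [hsdef]; field_simp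
  -- the value 2/M is a valid zero of the kernel
  have hzero : ∀ x : ℝ, x = 2 / (M : ℝ) ∨ x = -(2 / (M : ℝ)) → dirichletKernel M x = 0 := by
    rintro x (rfl | rfl)
    · exact dk_eq_zero M (by positivity) (by rw [abs_of_pos (by positivity)]; rw [div_lt_iff₀ hM0]; linarith) 1
        (by field_simp; norm_num)
    · refine dk_eq_zero M (by simp; positivity) ?_ (-1) (by push_cast; field_simp)
      rw [abs_neg, abs_of_pos (by positivity), div_lt_iff₀ hM0]; linarith
  refine ⟨?_, ?_, ?_⟩
  · unfold sUPAFactor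
    rw [add_sub_cancel_left, hsin, hcs]
    rw [hzero _ (Or.inl rfl)]
    ring
  · unfold sUPAFactor
    rw [show η - Real.arcsin s - η = -(Real.arcsin s) by ring, Real.sin_neg, hsin]
    rw [show c * -s = -(2 / (M:ℝ)) by rw [mul_neg, hcs]]
    rw [hzero _ (Or.inr rfl)]
    ring
  · intro φ hφ
    set δ := φ - η with hδdef
    have harcle : Real.arcsin s < Real.pi / 2 := (Real.arcsin_lt_pi_div_two).mpr hs1
    have harcmem : Real.arcsin s ∈ Set.Icc (-(Real.pi/2)) (Real.pi/2) :=
      ⟨Real.neg_pi_div_two_le_arcsin s, Real.arcsin_le_pi_div_two s⟩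
    obtain ⟨hφ1, hφ2⟩ := abs_lt.mp hφ
    have hδmem : δ ∈ Set.Icc (-(Real.pi/2)) (Real.pi/2) := by
      constructor <;> nlinarith [harcmem.1, harcmem.2]
    have hsinlt : Real.sin δ < s := by
      calc Real.sin δ < Real.sin (Real.arcsin s) :=
            Real.strictMonoOn_sin hδmem harcmem hφ2
        _ = s := hsin
    have hsingt : -s < Real.sin δ := by
      have : Real.sin (-(Real.arcsin s)) < Real.sin δ :=
        Real.strictMonoOn_sin (by constructor <;> nlinarith [harcmem.1, harcmem.2]) hδmem hφ1
      rwa [Real.sin_neg, hsin] at this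
    have hcosδ : 0 < Real.cos δ := Real.cos_pos_of_mem_Ioo
      ⟨by linarith, by linarith⟩
    have hcosδ1 : Real.cos δ ≤ 1 := Real.cos_le_one δ
    -- first factor
    have h1 : |c * Real.sin δ| < 2 / M := by
      rw [abs_mul, abs_of_pos hc, ← hcs]
      have : |Real.sin δ| < s := abs_lt.mpr ⟨hsingt, hsinlt⟩
      exact mul_lt_mul_of_pos_left this hc
    -- second factor
    have h2 : |Real.sin ϑ * c - c * Real.sin ϑ * Real.cos δ| < 2 / M := by
      rw [show Real.sin ϑ * c - c * Real.sin ϑ * Real.cos δ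
            = Real.sin ϑ * c * (1 - Real.cos δ) by ring]
      rw [abs_mul, abs_mul, abs_of_pos hc, _root_.abs_of_nonneg (by linarith : (0:ℝ) ≤ 1 - Real.cos δ)]
      have hsϑ : |Real.sin ϑ| ≤ 1 := Real.abs_sin_le_one ϑ
      have hpyth : Real.sin δ ^ 2 + Real.cos δ ^ 2 = 1 := Real.sin_sq_add_cos_sq δ
      have key : 1 - Real.cos δ ≤ Real.sin δ ^ 2 := by nlinarith
      have hsq : Real.sin δ ^ 2 < s ^ 2 := by nlinarith
      have hfinal : c * s ^ 2 < 2 / M := by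
        have heq : c * s ^ 2 = 4 / ((M:ℝ)^2 * c) := by
          rw [hsdef]; field_simp; ring
        rw [heq, div_lt_div_iff₀ (by positivity) hM0]
        nlinarith [mul_pos hM0 hc]
      calc |Real.sin ϑ| * c * (1 - Real.cos δ)
          ≤ 1 * (c * (1 - Real.cos δ)) := by
            rw [mul_assoc]
            exact mul_le_mul_of_nonneg_right hsϑ (by nlinarith)
        _ = c * (1 - Real.cos δ) := one_mul _
        _ ≤ c * Real.sin δ ^ 2 := mul_le_mul_of_nonneg_left key hc.le
        _ < c * s ^ 2 := mul_lt_mul_of_pos_left hsq hc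
        _ < 2 / M := hfinal
    have hM1 : 1 ≤ M := by omega
    unfold sUPAFactor
    exact mul_ne_zero (mul_ne_zero (pow_ne_zero 2 (by exact_mod_cast hM0.ne')) (dk_ne_zero M hM1 h1)) (dk_ne_zero M hM1 h2)
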